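/- Let k be an algebraically closed field, M a k-vector space, and λ, μ ∈ k. Let f(x,y) = Σ_{i,j ≥ 0} α_{ij} x^i y^j ∈ k[x,y] satisfy f(λ, μ) ≠ 0. Let W_λ be an m×m upper triangular matrix over k all of whose diagonal entries equal λ, and W_μ an n×n upper triangular matrix over k all of whose diagonal entries equal μ (for instance, Weyr matrices of eigenvalues λ and μ). Let V = (v_{rs}) be an m×n matrix with entries in M such that the family {v_{rs} : 1 ≤ r ≤ m, 1 ≤ s ≤ n} is linearly independent over k. Set (u_{pq}) = f(W_λ, W_μ)V = Σ_{i,j ≥ 0} α_{ij} W_λ^i V W_μ^j. Then the family {u_{pq} : 1 ≤ p ≤ m, 1 ≤ q ≤ n} is linearly independent over k. -/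

import Mathlib

-- triangular power lemmas
theorem tri_pow_lt {k : Type*} [Field k] {m : ℕ} (W : Matrix (Fin m) (Fin m) k)
    (htri : ∀ i j : Fin m, j < i → W i j = 0) (i : ℕ) :
    ∀ p r : Fin m, r < p → (W ^ i) p r = 0 := by
  induction i with
  | zero => intro p r h; simp [Matrix.one_apply, (ne_of_lt h).symm]
  | succ i ih =>
    intro p r h
    rw [pow_succ, Matrix.mul_apply]
    apply Finset.sum_eq_zero
    intro t _
    rcases lt_or_ge t p with ht | ht
    · rw [ih p t ht, zero_mul]
    · rw [htri t r (lt_of_lt_of_le h ht), mul_zero]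

theorem tri_pow_diag {k : Type*} [Field k] {m : ℕ} (W : Matrix (Fin m) (Fin m) k)
    (htri : ∀ i j : Fin m, j < i → W i j = 0) {lam : k}
    (hdiag : ∀ i : Fin m, W i i = lam) (i : ℕ) :
    ∀ p : Fin m, (W ^ i) p p = lam ^ i := by
  induction i with
  | zero => intro p; simp [Matrix.one_apply]
  | succ i ih =>
    intro p
    rw [pow_succ, Matrix.mul_apply]
    rw [Finset.sum_eq_single p]
    · rw [ih, hdiag, pow_succ]
    · intro t _ ht
      rcases lt_or_gt_of_ne ht with h | h
      · rw [tri_pow_lt W htri i p t h, zero_mul]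
      · rw [htri t p h, mul_zero]
    · intro h; exact absurd (Finset.mem_univ p) h

/-- Let `k` be an algebraically closed field, `M` a `k`-vector space, `lam, mu ∈ k`, and
`f(x,y) = Σ_{i,j} α_{ij} x^i y^j ∈ k[x,y]` (encoded by its finitely supported family of
coefficients `α`) with `f(lam, mu) ≠ 0`. Let `Wl` be an `m × m` upper triangular matrix
over `k` with all diagonal entries equal to `lam`, and `Wm` an `n × n` upper triangular
matrix with all diagonal entries equal to `mu`. If `V = (v_{rs})` is an `m × n` matrix with
entries in `M` whose entries are linearly independent over `k`, then the entries of
`U = f(Wl, Wm)V = Σ_{i,j} α_{ij} Wl^i V Wm^j` are also linearly independent over `k`. -/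
theorem linearIndependent_of_weyr_transform
    (k : Type*) [Field k] [IsAlgClosed k]
    (M : Type*) [AddCommGroup M] [Module k M]
    (m n : ℕ) (lam mu : k)
    (α : ℕ × ℕ →₀ k)
    (hf : (α.sum fun ij c => c * lam ^ ij.1 * mu ^ ij.2) ≠ 0)
    (Wl : Matrix (Fin m) (Fin m) k)
    (hWl_tri : ∀ i j : Fin m, j < i → Wl i j = 0)
    (hWl_diag : ∀ i : Fin m, Wl i i = lam)
    (Wm : Matrix (Fin n) (Fin n) k)
    (hWm_tri : ∀ i j : Fin n, j < i → Wm i j = 0)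
    (hWm_diag : ∀ i : Fin n, Wm i i = mu)
    (V : Matrix (Fin m) (Fin n) M)
    (hV : LinearIndependent k fun rs : Fin m × Fin n => V rs.1 rs.2)
    (U : Matrix (Fin m) (Fin n) M)
    (hU : ∀ (p : Fin m) (q : Fin n), U p q = α.sum fun ij c =>
      c • ∑ r : Fin m, ∑ s : Fin n, ((Wl ^ ij.1) p r * (Wm ^ ij.2) s q) • V r s) :
    LinearIndependent k fun pq : Fin m × Fin n => U pq.1 pq.2 := by
  classical
  -- the coefficient matrix
  set A : Matrix (Fin m × Fin n) (Fin m × Fin n) k := fun pq rs =>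
    ∑ ij ∈ α.support, α ij * ((Wl ^ ij.1) pq.1 rs.1 * (Wm ^ ij.2) rs.2 pq.2) with hA
  -- U in terms of A
  have hU' : ∀ pq : Fin m × Fin n, U pq.1 pq.2 = ∑ rs : Fin m × Fin n, A pq rs • V rs.1 rs.2 := by
    intro pq
    rw [hU]
    simp only [Finsupp.sum, Finset.smul_sum, smul_smul, Fintype.sum_prod_type, hA,
      Finset.sum_smul]
    rw [Finset.sum_comm]
    refine Finset.sum_congr rfl fun r _ => ?_
    rw [Finset.sum_comm]
  -- A is upper triangular & has nonzero diagonal; hence det ≠ 0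
  have hdiagA : ∀ pq : Fin m × Fin n, A pq pq = α.sum fun ij c => c * lam ^ ij.1 * mu ^ ij.2 := by
    intro pq
    rw [hA, Finsupp.sum]
    refine Finset.sum_congr rfl fun ij _ => ?_
    rw [tri_pow_diag Wl hWl_tri hWl_diag, tri_pow_diag Wm hWm_tri hWm_diag]
    ring
  have hzeroA : ∀ pq rs : Fin m × Fin n,
      (rs.1 < pq.1 ∨ (rs.1 = pq.1 ∧ pq.2 < rs.2)) → A pq rs = 0 := by
    intro pq rs h
    rw [hA]
    apply Finset.sum_eq_zero
    intro ij _
    rcases h with h | ⟨h1, h2⟩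
    · rw [tri_pow_lt Wl hWl_tri _ _ _ h]; ring
    · rw [tri_pow_lt Wm hWm_tri _ _ _ h2]; ring
  have hdet : A.det ≠ 0 := by
    let e : (Fin m × Fin n) ≃ Lex (Fin m × (Fin n)ᵒᵈ) :=
      ((Equiv.refl (Fin m)).prodCongr OrderDual.toDual).trans toLex
    have : A.det = ((Matrix.reindex e e) A).det := (Matrix.det_reindex_self e A).symm
    rw [this, Matrix.det_of_upperTriangular]
    · apply Finset.prod_ne_zero_iff.2
      intro i _
      rw [Matrix.reindex_apply, Matrix.submatrix_apply, hdiagA]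
      exact hf
    · intro i j hij
      rw [Matrix.reindex_apply, Matrix.submatrix_apply]
      rcases Prod.Lex.lt_iff.1 hij with h | ⟨h1, h2⟩
      · exact hzeroA _ _ (Or.inl h)
      · exact hzeroA _ _ (Or.inr ⟨h1, h2⟩)
  -- conclude
  rw [Fintype.linearIndependent_iff] at hV ⊢
  intro g hg pq
  have key : ∀ rs : Fin m × Fin n, Matrix.vecMul g A rs = 0 := by
    apply hV
    rw [← hg]
    simp only [hU', Matrix.vecMul, dotProduct, Finset.smul_sum, Finset.sum_smul, smul_smul]
    rw [Finset.sum_comm]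
  have : g = 0 := Matrix.eq_zero_of_vecMul_eq_zero hdet (funext key)
  exact congrFun this pq
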